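/- Every k₁-Hausdorff topological space is KC; that is, if the diagonal Δ_X is k₁-closed in X × X, then every compact subset of X is closed. -/

import Mathlib

open Set Filter Topology

universe u

/-- A subset `C` of a space `X` is k₁-closed provided for every compact subset `K` of `X`,
the intersection `C ∩ K` is closed in the subspace topology on `K`. -/
def IsK1Closed {X : Type u} [TopologicalSpace X] (C : Set X) : Prop :=
  ∀ K : Set X, IsCompact K → IsClosed ((Subtype.val : K → X) ⁻¹' C)

/-- A space is k₁-Hausdorff provided its diagonal is k₁-closed in its square. -/
def K1Hausdorff (X : Type u) [TopologicalSpace X] : Prop :=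
  IsK1Closed {p : X × X | p.1 = p.2}

/-- A space is KC provided every compact subset is closed. -/
def KCSpace (X : Type u) [TopologicalSpace X] : Prop :=
  ∀ K : Set X, IsCompact K → IsClosed K

/-- A space `X` is weakly Hausdorff provided for every compact Hausdorff space `K` and
continuous `f : K → X`, the image of `f` is closed in `X`. -/
def WeaklyHausdorff (X : Type u) [TopologicalSpace X] : Prop :=
  ∀ (K : Type u) [TopologicalSpace K] [CompactSpace K] [T2Space K]
    (f : K → X), Continuous f → IsClosed (Set.range f)

/-- A subset `C` of `X` is k₂-closed provided for every compact Hausdorff space `K` and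
continuous `f : K → X`, the preimage `f ⁻¹' C` is closed in `K`. -/
def IsK2Closed {X : Type u} [TopologicalSpace X] (C : Set X) : Prop :=
  ∀ (K : Type u) [TopologicalSpace K] [CompactSpace K] [T2Space K]
    (f : K → X), Continuous f → IsClosed (f ⁻¹' C)

/-- A space is k₂-Hausdorff provided its diagonal is k₂-closed in its square. -/
def K2Hausdorff (X : Type u) [TopologicalSpace X] : Prop :=
  IsK2Closed {p : X × X | p.1 = p.2}

/-- A space has unique sequential limits provided every convergent sequence has a unique limit. -/
def UniqueSequentialLimits (X : Type u) [TopologicalSpace X] : Prop :=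
  ∀ (a : ℕ → X) (l₀ l₁ : X),
    Filter.Tendsto a Filter.atTop (nhds l₀) →
    Filter.Tendsto a Filter.atTop (nhds l₁) → l₀ = l₁

/-- Every k₁-Hausdorff space is KC: every compact subset is closed. -/
theorem k1Hausdorff_implies_kc (X : Type u) [TopologicalSpace X] (h : K1Hausdorff X) :
    ∀ K : Set X, IsCompact K → IsClosed K := by
  intro K hK
  refine isClosed_of_closure_subset ?_
  intro x hx
  set L : Set X := insert x K with hLdef
  have hL : IsCompact L := hK.insert x
  have hT2 : T2Space L := by
    rw [t2_iff_isClosed_diagonal]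
    have hcl := h (L ×ˢ L) (hL.prod hL)
    have heq : Set.diagonal ↥L =
        (Homeomorph.Set.prod L L).symm ⁻¹'
          ((Subtype.val : ↥(L ×ˢ L) → X × X) ⁻¹' {p : X × X | p.1 = p.2}) := by
      ext ⟨a, b⟩
      simp [Set.diagonal, Homeomorph.Set.prod, Equiv.Set.prod, Equiv.subtypeProdEquivProd,
        Subtype.ext_iff]
      exact Iff.rfl
    rw [heq]
    exact hcl.preimage (Homeomorph.Set.prod L L).symm.continuous
  have hKsub : K ⊆ L := subset_insert x K
  have himg : (Subtype.val : ↥L → X) '' (Subtype.val ⁻¹' K) = K := by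
    rw [Subtype.image_preimage_coe]
    exact inter_eq_self_of_subset_right hKsub
  have hcpt : IsCompact ((Subtype.val : ↥L → X) ⁻¹' K) := by
    rw [IsEmbedding.subtypeVal.isCompact_iff, himg]
    exact hK
  have hclosed : IsClosed ((Subtype.val : ↥L → X) ⁻¹' K) := hcpt.isClosed
  have hxL : x ∈ L := mem_insert x K
  have : (⟨x, hxL⟩ : ↥L) ∈ closure ((Subtype.val : ↥L → X) ⁻¹' K) := by
    rw [closure_subtype, himg]
    exact hx
  exact hclosed.closure_subset this
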